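/- arXiv:1701.07768 — 2 statements merged into one kernel-verified Lean document; each statement's English description precedes it below -/
import Mathlib

section
/- Let G be a finitely generated group. Then 𝔥(G/Γ₂G) ≅ 𝔥(G)/𝔥(G)′, and for every k ≥ 3 the projection G → G/Γ_kG induces an isomorphism of graded Lie algebras 𝔥(G) ≅ 𝔥(G/Γ_kG). In particular, the holonomy Lie algebra of G depends only on the second nilpotent quotient G/Γ₃G. -/
open TensorProduct

open scoped commutatorElement

noncomputable section

namespace ArXiv170107768

/-! ### Fox calculus and Magnus coefficients for free groups -/

/-- The integral group ring `ℤF` of the free group on `n` generators. -/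
abbrev GrpRing (n : ℕ) := MonoidAlgebra ℤ (FreeGroup (Fin n))

/-- Auxiliary group used to define Fox derivatives: pairs `(g, d)` with
multiplication `(g, d) * (h, e) = (g h, d + g·e)`, encoding the Fox product rule
`∂(uv) = ∂u · ε(v) + u · ∂v`. -/
def FoxPair (n : ℕ) := FreeGroup (Fin n) × GrpRing n

instance (n : ℕ) : Group (FoxPair n) where
  mul a b := (a.1 * b.1, a.2 + MonoidAlgebra.single a.1 1 * b.2)
  one := (1, 0)
  inv a := (a.1⁻¹, -(MonoidAlgebra.single a.1⁻¹ 1 * a.2))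
  mul_assoc a b c := by
    refine Prod.ext (mul_assoc _ _ _) ?_
    show (a.2 + MonoidAlgebra.single a.1 1 * b.2) + MonoidAlgebra.single (a.1 * b.1) 1 * c.2
        = a.2 + MonoidAlgebra.single a.1 1 * (b.2 + MonoidAlgebra.single b.1 1 * c.2)
    rw [mul_add, ← mul_assoc, MonoidAlgebra.single_mul_single, mul_one, add_assoc]
  one_mul a := by
    refine Prod.ext (one_mul _) ?_
    show 0 + MonoidAlgebra.single 1 1 * a.2 = a.2
    rw [← MonoidAlgebra.one_def, one_mul, zero_add]
  mul_one a := by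
    refine Prod.ext (mul_one _) ?_
    show a.2 + MonoidAlgebra.single a.1 1 * 0 = a.2
    rw [mul_zero, add_zero]
  inv_mul_cancel a := by
    refine Prod.ext (inv_mul_cancel _) ?_
    show -(MonoidAlgebra.single a.1⁻¹ 1 * a.2) + MonoidAlgebra.single a.1⁻¹ 1 * a.2 = 0
    exact neg_add_cancel _

/-- The group homomorphism `F → F ⋉ ℤF` whose second component is the `i`-th Fox
derivative (on group elements). It is determined by `x_j ↦ (x_j, δ_{ij})`. -/
def foxHom {n : ℕ} (i : Fin n) : FreeGroup (Fin n) →* FoxPair n :=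
  FreeGroup.lift fun j => (FreeGroup.of j, if j = i then 1 else 0)

/-- The `i`-th Fox derivative `∂_i : ℤF → ℤF`, extended `ℤ`-linearly from group elements. -/
def foxD {n : ℕ} (i : Fin n) : GrpRing n →ₗ[ℤ] GrpRing n :=
  (Finsupp.linearCombination ℤ fun g => (foxHom i g).2) ∘ₗ
    (MonoidAlgebra.coeffLinearEquiv ℤ).toLinearMap

/-- The augmentation map `ε : ℤF → ℤ`. -/
def aug {n : ℕ} : GrpRing n →ₗ[ℤ] ℤ :=
  (Finsupp.linearCombination ℤ fun _ => (1 : ℤ)) ∘ₗ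
    (MonoidAlgebra.coeffLinearEquiv ℤ).toLinearMap

/-- For a multi-index `I = (i₁, …, i_s)`, the iterated Fox derivative coefficient
`ε_I(w) = ε(∂_{i₁}(∂_{i₂}(⋯ ∂_{i_s}(w))))`; this is the coefficient of `x_{i₁}⋯x_{i_s}`
in the classical Magnus expansion of `w`. -/
def epsI {n : ℕ} (I : List (Fin n)) (w : FreeGroup (Fin n)) : ℤ :=
  aug (I.foldr (fun i x => foxD i x) (MonoidAlgebra.single w 1))

/-- The coefficients of the Magnus `κ`-expansion relative to the `b × n` matrix `a` of
`π = H₁(φ; ℚ)`:  `κ(w)_{(i₁,…,i_k)} = Σ_{s₁,…,s_k} a_{i₁ s₁} ⋯ a_{i_k s_k} ε_{(s₁,…,s_k)}(w)`. -/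
def kappaCoeff {n b : ℕ} (a : Fin b → Fin n → ℚ) (w : FreeGroup (Fin n))
    (I : List (Fin b)) : ℚ :=
  ∑ σ : Fin I.length → Fin n, (∏ j, a (I.get j) (σ j)) * (epsI (List.ofFn σ) w : ℚ)

/-- The degree-2 part of the Magnus `κ`-expansion, viewed in the free Lie algebra:
`κ₂(w) = Σ_{i<j} κ(w)_{i,j} [y_i, y_j]`. -/
def kappa2El {n b : ℕ} (a : Fin b → Fin n → ℚ) (w : FreeGroup (Fin n)) :
    FreeLieAlgebra ℚ (Fin b) :=
  ∑ i : Fin b, ∑ j : Fin b,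
    if (i : ℕ) < (j : ℕ) then
      kappaCoeff a w [i, j] • ⁅FreeLieAlgebra.of ℚ i, FreeLieAlgebra.of ℚ j⁆
    else 0

/-- The `m × n` matrix `E` is in row-echelon form with `d` nonzero rows and pivots `p`. -/
structure IsRowEchelonWith {m n : ℕ} (E : Fin m → Fin n → ℤ) (d : ℕ)
    (p : Fin d → Fin n) : Prop where
  le_m : d ≤ m
  mono : StrictMono p
  pivot_ne : ∀ (k : Fin d) (hk : (k : ℕ) < m), E ⟨k, hk⟩ (p k) ≠ 0
  pivot_lead : ∀ (k : Fin d) (hk : (k : ℕ) < m) (j : Fin n), (j : ℕ) < (p k : ℕ) →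
    E ⟨k, hk⟩ j = 0
  zero_rows : ∀ k : Fin m, d ≤ (k : ℕ) → ∀ j, E k j = 0

/-! ### Lower central series and the rational associated graded Lie algebra -/

/-- The lower central series with the paper's indexing: `Γ₁ G = G`, `Γ_{k+1} G = [Γ_k G, G]`. -/
def gammaP (G : Type*) [Group G] (k : ℕ) : Subgroup G := (⊤ : Subgroup G).lowerCentralSeries (k - 1)

instance (G : Type*) [Group G] (k : ℕ) : (gammaP G k).Normal := by
  unfold gammaP; infer_instance

lemma mem_gammaP_one {G : Type*} [Group G] (g : G) : g ∈ gammaP G 1 := by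
  show g ∈ (⊤ : Subgroup G).lowerCentralSeries 0
  rw [Subgroup.lowerCentralSeries_zero]; trivial

lemma commElt_mem_gammaP_two {G : Type*} [Group G] (x y : G) : ⁅x, y⁆ ∈ gammaP G 2 := by
  show ⁅x, y⁆ ∈ (⊤ : Subgroup G).lowerCentralSeries 1
  rw [Subgroup.top_lowerCentralSeries_one, commutator_def]
  exact Subgroup.commutator_mem_commutator (Subgroup.mem_top x) (Subgroup.mem_top y)

/-- The quotient group `Γ_k G / Γ_{k+1} G`. -/
def lcsQuot (G : Type*) [Group G] (k : ℕ) :=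
  (gammaP G k) ⧸ ((gammaP G (k + 1)).subgroupOf (gammaP G k))

instance (G : Type*) [Group G] (k : ℕ) : Group (lcsQuot G k) := by
  unfold lcsQuot; infer_instance

/-- The degree-`k` piece `gr_k(G; ℚ) = (Γ_k G / Γ_{k+1} G) ⊗ ℚ` of the rational associated
graded Lie algebra.  (The quotient `Γ_k/Γ_{k+1}` is abelian, so passing through its
abelianization is the identity.) -/
def grQ (G : Type*) [Group G] (k : ℕ) :=
  ℚ ⊗[ℤ] (Additive (Abelianization (lcsQuot G k)))

instance (G : Type*) [Group G] (k : ℕ) : AddCommGroup (grQ G k) := by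
  unfold grQ; infer_instance

instance (G : Type*) [Group G] (k : ℕ) : Module ℚ (grQ G k) := by
  unfold grQ; infer_instance

/-- The class in `gr_k(G; ℚ)` of an element of `Γ_k G`. -/
def grCls (G : Type*) [Group G] (k : ℕ) (x : gammaP G k) : grQ G k :=
  (1 : ℚ) ⊗ₜ[ℤ] Additive.ofMul (Abelianization.of (QuotientGroup.mk x : lcsQuot G k))

/-! ### Models of `H₁(G;ℚ)`, of `gr(G;ℚ)` as a graded Lie algebra, and of `𝔥(G)` -/

/-- `(V, cls)` is a model of `H₁(G; ℚ) = G_{ab} ⊗ ℚ` together with its canonical class map. -/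
structure IsH1Q (G : Type u) [Group G] (V : Type v) [AddCommGroup V] [Module ℚ V]
    (cls : G → V) : Prop where
  map_mul : ∀ x y : G, cls (x * y) = cls x + cls y
  ker : ∀ x : G, cls x = 0 ↔ ∃ k : ℕ, 0 < k ∧ x ^ k ∈ commutator G
  span : Submodule.span ℚ (Set.range cls) = ⊤

/-- `(L, Lk, cls)` is a model of the rational associated graded Lie algebra
`gr(G; ℚ) = ⊕_{k ≥ 1} (Γ_k G/Γ_{k+1} G) ⊗ ℚ`, with `Lk k` the degree-`k` piece and
`cls k : Γ_k G → L` the canonical class maps; the Lie bracket is induced by the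
group commutator. -/
structure IsGrLie (G : Type u) [Group G] (L : Type v) [LieRing L] [LieAlgebra ℚ L]
    (Lk : ℕ → Submodule ℚ L) (cls : ∀ k : ℕ, (gammaP G k) → L) : Prop where
  internal : DirectSum.IsInternal Lk
  zero : Lk 0 = ⊥
  mem : ∀ (k : ℕ) (x : gammaP G k), cls k x ∈ Lk k
  map_mul : ∀ (k : ℕ) (x y : gammaP G k), cls k (x * y) = cls k x + cls k y
  ker : ∀ (k : ℕ) (x : gammaP G k),
    cls k x = 0 ↔ ∃ j : ℕ, 0 < j ∧ (x : G) ^ j ∈ gammaP G (k + 1)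
  span : ∀ k : ℕ, Lk k = Submodule.span ℚ (Set.range (cls k))
  bracket : ∀ (j k : ℕ) (x : gammaP G j) (y : gammaP G k)
      (h : ⁅(x : G), (y : G)⁆ ∈ gammaP G (j + k)),
      ⁅cls j x, cls k y⁆ = cls (j + k) ⟨⁅(x : G), (y : G)⁆, h⟩

/-- The finite family `(c_i, x_i, y_i)` represents `0` in `gr₂(G; ℚ)`; equivalently, the
corresponding element `Σ c_i · (x̄_i ∧ ȳ_i)` of `⋀² H₁(G;ℚ)` lies in the kernel of the Lie
bracket map `⋀² H₁(G;ℚ) → gr₂(G;ℚ)`. -/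
def GrTrivial (G : Type*) [Group G] (s : Finset ℕ) (c : ℕ → ℚ) (x y : ℕ → G) : Prop :=
  ∑ i ∈ s, c i • grCls G 2 ⟨⁅x i, y i⁆, commElt_mem_gammaP_two _ _⟩ = 0

/-- `(H, ι)` is a model of the holonomy Lie algebra `𝔥(G)`: the quotient of the free
Lie algebra on `H₁(G; ℚ)` by the ideal generated by the kernel of the Lie bracket map
`⋀² H₁(G;ℚ) → gr₂(G;ℚ)` (equivalently, by the image of the dual of the cup product).
Here `ι : G → H` is the composite of the class map `G → H₁(G;ℚ)` with the inclusion of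
the degree-one part, and `H` is characterized by the universal property of this quotient. -/
structure IsHolonomy (G : Type u) [Group G] (H : Type v) [LieRing H] [LieAlgebra ℚ H]
    (ι : G → H) : Prop where
  map_mul : ∀ x y : G, ι (x * y) = ι x + ι y
  ker : ∀ x : G, ι x = 0 ↔ ∃ k : ℕ, 0 < k ∧ x ^ k ∈ commutator G
  gen : LieSubalgebra.lieSpan ℚ H (Set.range ι) = ⊤
  rel : ∀ (s : Finset ℕ) (c : ℕ → ℚ) (x y : ℕ → G), GrTrivial G s c x y →
      ∑ i ∈ s, c i • ⁅ι (x i), ι (y i)⁆ = 0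
  univ : ∀ (M : Type (max u v)) [LieRing M] [LieAlgebra ℚ M] (f : G → M),
      (∀ x y : G, f (x * y) = f x + f y) →
      (∀ (s : Finset ℕ) (c : ℕ → ℚ) (x y : ℕ → G), GrTrivial G s c x y →
        ∑ i ∈ s, c i • ⁅f (x i), f (y i)⁆ = 0) →
      ∃! F : H →ₗ⁅ℚ⁆ M, ∀ g : G, F (ι g) = f g

/-! ### Gradings -/

/-- The standard grading determined by a degree-one piece `V` of a Lie algebra generated in
degree one: `lieDeg V 1 = V` and `lieDeg V (k+1) = span ⁅V, lieDeg V k⁆`. -/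
def lieDeg {L : Type*} [LieRing L] [LieAlgebra ℚ L] (V : Submodule ℚ L) :
    ℕ → Submodule ℚ L
  | 0 => ⊥
  | 1 => V
  | (k + 2) => Submodule.span ℚ {z | ∃ x ∈ V, ∃ y ∈ lieDeg V (k + 1), z = ⁅x, y⁆}

/-- The canonical grading of (a model of) the holonomy Lie algebra `𝔥(G)`, with
`H₁(G;ℚ)` in degree one. -/
def holDeg {G : Type u} [Group G] {H : Type v} [LieRing H] [LieAlgebra ℚ H]
    (ι : G → H) (k : ℕ) : Submodule ℚ H :=
  lieDeg (Submodule.span ℚ (Set.range ι)) k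

/-- Two Lie algebras with specified gradings are isomorphic as graded Lie algebras. -/
def IsGradedLieIso {L₁ : Type u} {L₂ : Type v} [LieRing L₁] [LieAlgebra ℚ L₁]
    [LieRing L₂] [LieAlgebra ℚ L₂] (d₁ : ℕ → Submodule ℚ L₁) (d₂ : ℕ → Submodule ℚ L₂) :
    Prop :=
  ∃ e : L₁ ≃ₗ⁅ℚ⁆ L₂, ∀ k, (d₁ k).map (e.toLinearEquiv.toLinearMap) = d₂ k

/-! ### Finitely presented Lie algebras -/

/-- The degree-one part of the free Lie algebra on the generating set `X`. -/
def flV (X : Type*) : Submodule ℚ (FreeLieAlgebra ℚ X) :=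
  Submodule.span ℚ (Set.range (FreeLieAlgebra.of ℚ))

/-- The quotient of the free Lie algebra on the generating set `X` by the Lie ideal
generated by the set `S`. -/
def presLie (X : Type*) (S : Set (FreeLieAlgebra ℚ X)) :=
  (FreeLieAlgebra ℚ X) ⧸ (LieSubmodule.lieSpan ℚ (FreeLieAlgebra ℚ X) S)

instance (X : Type*) (S : Set (FreeLieAlgebra ℚ X)) : LieRing (presLie X S) := by
  unfold presLie; infer_instance

instance (X : Type*) (S : Set (FreeLieAlgebra ℚ X)) : LieAlgebra ℚ (presLie X S) := by
  unfold presLie; infer_instance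

/-- The induced grading on `presLie X S` (images of the graded pieces of the free
Lie algebra). -/
def presDeg (X : Type*) (S : Set (FreeLieAlgebra ℚ X)) (k : ℕ) :
    Submodule ℚ (presLie X S) :=
  (lieDeg (flV X) k).map
    (LieSubmodule.Quotient.mk' (LieSubmodule.lieSpan ℚ (FreeLieAlgebra ℚ X) S)).toLinearMap

/-- `G` is graded-formal: the canonical surjection `Φ_G : 𝔥(G) ↠ gr(G;ℚ)` (the morphism
restricting to the identity of `H₁(G;ℚ)` in degree one) is an isomorphism. -/
def GradedFormal (G : Type u) [Group G] : Prop :=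
  ∀ (H : Type u) [LieRing H] [LieAlgebra ℚ H] (ι : G → H)
    (L : Type u) [LieRing L] [LieAlgebra ℚ L] (Lk : ℕ → Submodule ℚ L)
    (cls : ∀ k : ℕ, (gammaP G k) → L),
    IsHolonomy G H ι → IsGrLie G L Lk cls →
    ∀ Φ : H →ₗ⁅ℚ⁆ L, (∀ g : G, Φ (ι g) = cls 1 ⟨g, mem_gammaP_one g⟩) →
    Function.Bijective Φ


universe u


section AuxHelpers

variable {G : Type*} [Group G]

lemma gammaP_le_of_le {j k : ℕ} (h : j ≤ k) : gammaP G k ≤ gammaP G j :=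
  (⊤ : Subgroup G).lowerCentralSeries_antitone (Nat.sub_le_sub_right h 1)

lemma gammaP_two_eq : gammaP G 2 = commutator G := rfl

lemma mem_gammaP_map {G' : Type*} [Group G'] (f : G →* G') {k : ℕ}
    {g : G} (hg : g ∈ gammaP G k) : f g ∈ gammaP G' k :=
  lowerCentralSeries.map f _ ⟨g, hg, rfl⟩

lemma gammaP_map_eq {G' : Type*} [Group G'] (f : G →* G')
    (hf : Function.Surjective f) (k : ℕ) :
    (gammaP G k).map f = gammaP G' k := by
  show ((⊤ : Subgroup G).lowerCentralSeries (k-1)).map f = (⊤ : Subgroup G').lowerCentralSeries (k-1)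
  generalize (k-1) = n
  induction n with
  | zero => simpa using Subgroup.map_top_of_surjective f hf
  | succ n ih =>
    show Subgroup.map f ⁅(⊤ : Subgroup G).lowerCentralSeries n, ⊤⁆ = ⁅(⊤ : Subgroup G').lowerCentralSeries n, ⊤⁆
    rw [Subgroup.map_commutator, ih, Subgroup.map_top_of_surjective f hf]

lemma grCls_mul (k : ℕ) (x y : gammaP G k) :
    grCls G k (x * y) = grCls G k x + grCls G k y := by
  unfold grCls
  erw [← TensorProduct.tmul_add]
  congr 1

lemma grCls_zero_of_mem (k : ℕ) (x : gammaP G k)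
    (hx : (x : G) ∈ gammaP G (k + 1)) : grCls G k x = 0 := by
  unfold grCls
  have h1 : (QuotientGroup.mk x : lcsQuot G k) = 1 :=
    (QuotientGroup.eq_one_iff _).mpr (Subgroup.mem_subgroupOf.mpr hx)
  erw [h1, map_one (Abelianization.of (G := lcsQuot G k))]
  show (1:ℚ) ⊗ₜ[ℤ] (0 : Additive _) = 0
  rw [TensorProduct.tmul_zero]

lemma grCls_congr (k : ℕ) (x y : gammaP G k)
    (h : ((x : G))⁻¹ * (y : G) ∈ gammaP G (k + 1)) : grCls G k x = grCls G k y := by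
  unfold grCls
  have h1 : (QuotientGroup.mk x : lcsQuot G k) = QuotientGroup.mk y :=
    QuotientGroup.eq.mpr (Subgroup.mem_subgroupOf.mpr (by simpa using h))
  rw [h1]

lemma exists_linearMap_grQ (G : Type*) [Group G] (k : ℕ) (N : Type*) [AddCommGroup N]
    [Module ℚ N] (v : (gammaP G k) → N)
    (hmul : ∀ x y, v (x * y) = v x + v y)
    (hcongr : ∀ x : gammaP G k, (x : G) ∈ gammaP G (k + 1) → v x = 0) :
    ∃ θ : grQ G k →ₗ[ℚ] N, ∀ x, θ (grCls G k x) = v x := by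
  have hv1 : v 1 = 0 := by have := hmul 1 1; rwa [one_mul, left_eq_add] at this
  let v' : (gammaP G k) →* Multiplicative N :=
    { toFun := fun x => Multiplicative.ofAdd (v x)
      map_one' := by simp [hv1]
      map_mul' := fun x y => by simp [hmul] }
  have hker : ∀ x ∈ (gammaP G (k+1)).subgroupOf (gammaP G k), v' x = 1 := by
    intro x hx
    have hx0 : v x = 0 := hcongr x (Subgroup.mem_subgroupOf.mp hx)
    show Multiplicative.ofAdd (v x) = 1
    simp [hx0]
  let w : lcsQuot G k →* Multiplicative N := QuotientGroup.lift _ v' hker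
  let wa : Abelianization (lcsQuot G k) →* Multiplicative N := Abelianization.lift w
  let a : Additive (Abelianization (lcsQuot G k)) →+ N := MonoidHom.toAdditiveLeft wa
  let θ0 : (ℚ ⊗[ℤ] Additive (Abelianization (lcsQuot G k))) →ₗ[ℚ] N :=
    LinearMap.liftBaseChange ℚ a.toIntLinearMap
  refine ⟨θ0, fun x => ?_⟩
  show θ0 ((1:ℚ) ⊗ₜ[ℤ]
    Additive.ofMul (Abelianization.of (QuotientGroup.mk x : lcsQuot G k))) = v x
  rw [LinearMap.liftBaseChange_tmul, one_smul]
  rfl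

lemma grTrivial_map {G' : Type*} [Group G'] (f : G →* G')
    (s : Finset ℕ) (c : ℕ → ℚ) (x y : ℕ → G) (h : GrTrivial G s c x y) :
    GrTrivial G' s c (fun i => f (x i)) (fun i => f (y i)) := by
  obtain ⟨θ, hθ⟩ := exists_linearMap_grQ G 2 (grQ G' 2)
      (fun u => grCls G' 2 ⟨f u, mem_gammaP_map f u.2⟩)
      (fun u u' => by
        rw [← grCls_mul]
        exact congrArg (grCls G' 2) (Subtype.ext (by push_cast; exact map_mul f _ _)))
      (fun u hu => grCls_zero_of_mem 2 _ (mem_gammaP_map f hu))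
  unfold GrTrivial at h ⊢
  have key : ∀ i, grCls G' 2 ⟨⁅f (x i), f (y i)⁆, commElt_mem_gammaP_two _ _⟩
      = θ (grCls G 2 ⟨⁅x i, y i⁆, commElt_mem_gammaP_two _ _⟩) := by
    intro i
    rw [hθ]
    congr 1
    exact Subtype.ext (map_commutatorElement f _ _).symm
  calc ∑ i ∈ s, c i • grCls G' 2 ⟨⁅f (x i), f (y i)⁆, commElt_mem_gammaP_two _ _⟩
      = ∑ i ∈ s, c i • θ (grCls G 2 ⟨⁅x i, y i⁆, commElt_mem_gammaP_two _ _⟩) := by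
        simp_rw [key]
    _ = θ (∑ i ∈ s, c i • grCls G 2 ⟨⁅x i, y i⁆, commElt_mem_gammaP_two _ _⟩) := by
        rw [map_sum]; simp_rw [map_smul]
    _ = 0 := by rw [h, map_zero]

lemma grTrivial_lift {G' : Type*} [Group G'] (f : G →* G')
    (hf : Function.Surjective f) (hker : f.ker ≤ gammaP G 3)
    (s : Finset ℕ) (c : ℕ → ℚ) (x y : ℕ → G') (x' y' : ℕ → G)
    (hx : ∀ i, f (x' i) = x i) (hy : ∀ i, f (y' i) = y i)
    (h : GrTrivial G' s c x y) : GrTrivial G s c x' y' := by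
  classical
  have hmap2 : ∀ q : gammaP G' 2, ∃ g : G, g ∈ gammaP G 2 ∧ f g = (q : G') := by
    intro q
    have hq2 : (q : G') ∈ (gammaP G 2).map f := by
      rw [gammaP_map_eq f hf 2]; exact q.2
    obtain ⟨g, hg, hfg⟩ := hq2
    exact ⟨g, hg, hfg⟩
  have key : ∀ (g g' : G) (hg : g ∈ gammaP G 2) (hg' : g' ∈ gammaP G 2),
      f g = f g' → grCls G 2 ⟨g, hg⟩ = grCls G 2 ⟨g', hg'⟩ := by
    intro g g' hg hg' hfg
    refine grCls_congr 2 _ _ (hker ?_)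
    rw [MonoidHom.mem_ker, map_mul, map_inv, hfg, inv_mul_cancel]
  choose lift hlift hflift using hmap2
  obtain ⟨θ, hθ⟩ := exists_linearMap_grQ G' 2 (grQ G 2)
      (fun q => grCls G 2 ⟨lift q, hlift q⟩)
      (fun q q' => by
        rw [← grCls_mul]
        refine key _ _ _ _ ?_
        rw [hflift, map_mul, hflift, hflift]
        rfl)
      (fun q hq => by
        have h3 : ∃ g3 : G, g3 ∈ gammaP G 3 ∧ f g3 = (q : G') := by
          have hq3 : (q : G') ∈ (gammaP G 3).map f := by
            rw [gammaP_map_eq f hf 3]; exact hq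
          obtain ⟨g3, hg3, hfg3⟩ := hq3
          exact ⟨g3, hg3, hfg3⟩
        obtain ⟨g3, hg3, hfg3⟩ := h3
        have hmem : lift q ∈ gammaP G 3 := by
          have hk : g3⁻¹ * lift q ∈ gammaP G 3 := by
            refine hker ?_
            rw [MonoidHom.mem_ker, map_mul, map_inv, hfg3, hflift, inv_mul_cancel]
          have : lift q = g3 * (g3⁻¹ * lift q) := by group
          rw [this]
          exact Subgroup.mul_mem _ hg3 hk
        exact grCls_zero_of_mem 2 _ hmem)
  have hv : ∀ (q : gammaP G' 2) (g : G) (hg : g ∈ gammaP G 2), f g = (q : G') →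
      grCls G 2 ⟨lift q, hlift q⟩ = grCls G 2 ⟨g, hg⟩ := by
    intro q g hg hfg
    exact key _ _ _ _ (by rw [hflift, hfg])
  unfold GrTrivial at h ⊢
  have keyterm : ∀ i, grCls G 2 ⟨⁅x' i, y' i⁆, commElt_mem_gammaP_two _ _⟩
      = θ (grCls G' 2 ⟨⁅x i, y i⁆, commElt_mem_gammaP_two _ _⟩) := by
    intro i
    rw [hθ]
    exact (hv _ _ (commElt_mem_gammaP_two _ _)
      (by rw [map_commutatorElement, hx, hy])).symm
  calc ∑ i ∈ s, c i • grCls G 2 ⟨⁅x' i, y' i⁆, commElt_mem_gammaP_two _ _⟩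
      = ∑ i ∈ s, c i • θ (grCls G' 2 ⟨⁅x i, y i⁆, commElt_mem_gammaP_two _ _⟩) := by
        simp_rw [keyterm]
    _ = θ (∑ i ∈ s, c i • grCls G' 2 ⟨⁅x i, y i⁆, commElt_mem_gammaP_two _ _⟩) := by
        rw [map_sum]; simp_rw [map_smul]
    _ = 0 := by rw [h, map_zero]

end AuxHelpers

section LieHelpers

variable {L : Type*} [LieRing L] [LieAlgebra ℚ L]

/-- The centralizer of an element, as a Lie subalgebra. -/
def centralizerLSA (a : L) : LieSubalgebra ℚ L where
  carrier := {z | ⁅z, a⁆ = 0}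
  add_mem' := by intro x y hx hy; show ⁅x + y, a⁆ = 0;
                 rw [add_lie]; rw [Set.mem_setOf_eq] at hx hy; rw [hx, hy, add_zero]
  zero_mem' := by show ⁅(0:L), a⁆ = 0; rw [zero_lie]
  smul_mem' := by intro c x hx; show ⁅c • x, a⁆ = 0;
                  rw [Set.mem_setOf_eq] at hx; rw [smul_lie, hx, smul_zero]
  lie_mem' := by
    intro x y hx hy
    show ⁅⁅x, y⁆, a⁆ = 0
    rw [Set.mem_setOf_eq] at hx hy
    rw [lie_lie, hx, hy, lie_zero, lie_zero, sub_zero]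

lemma bracket_eq_zero_of_gen (s : Set L)
    (hs : LieSubalgebra.lieSpan ℚ L s = ⊤)
    (hc : ∀ x ∈ s, ∀ y ∈ s, ⁅x, y⁆ = 0) : ∀ a b : L, ⁅a, b⁆ = 0 := by
  have step1 : ∀ x ∈ s, ∀ b : L, ⁅b, x⁆ = 0 := by
    intro x hx b
    have hle : LieSubalgebra.lieSpan ℚ L s ≤ centralizerLSA x := by
      rw [LieSubalgebra.lieSpan_le]
      intro y hy
      exact hc y hy x hx
    exact hle (hs ▸ LieSubalgebra.mem_top b)
  intro a b
  have hle : LieSubalgebra.lieSpan ℚ L s ≤ centralizerLSA b := by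
    rw [LieSubalgebra.lieSpan_le]
    intro z hz
    show ⁅z, b⁆ = 0
    have := step1 z hz b
    rw [← lie_skew, this, neg_zero]
  exact hle (hs ▸ LieSubalgebra.mem_top a)

/-- The equalizer of two Lie algebra morphisms, as a Lie subalgebra. -/
def eqLocusLSA {M : Type*} [LieRing M] [LieAlgebra ℚ M]
    (F F' : L →ₗ⁅ℚ⁆ M) : LieSubalgebra ℚ L where
  carrier := {z | F z = F' z}
  add_mem' := by intro x y hx hy; rw [Set.mem_setOf_eq] at hx hy;
                 show F (x + y) = F' (x + y); rw [map_add F, map_add F', hx, hy]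
  zero_mem' := by show F 0 = F' 0; rw [map_zero F, map_zero F']
  smul_mem' := by intro c x hx; rw [Set.mem_setOf_eq] at hx;
                  show F (c • x) = F' (c • x); rw [map_smul F, map_smul F', hx]
  lie_mem' := by
    intro x y hx hy
    rw [Set.mem_setOf_eq] at hx hy
    show F ⁅x, y⁆ = F' ⁅x, y⁆
    rw [LieHom.map_lie, LieHom.map_lie, hx, hy]

lemma lieHom_ext_of_lieSpan {M : Type*} [LieRing M] [LieAlgebra ℚ M]
    (F F' : L →ₗ⁅ℚ⁆ M) (s : Set L) (hs : LieSubalgebra.lieSpan ℚ L s = ⊤)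
    (h : ∀ x ∈ s, F x = F' x) : ∀ x, F x = F' x := by
  intro x
  have hle : LieSubalgebra.lieSpan ℚ L s ≤ eqLocusLSA F F' := by
    rw [LieSubalgebra.lieSpan_le]; exact h
  exact hle (hs ▸ LieSubalgebra.mem_top x)

lemma lieDeg_zero (V : Submodule ℚ L) : lieDeg V 0 = ⊥ := rfl
lemma lieDeg_one (V : Submodule ℚ L) : lieDeg V 1 = V := rfl
lemma lieDeg_succ_succ (V : Submodule ℚ L) (k : ℕ) :
    lieDeg V (k + 2) =
      Submodule.span ℚ {z | ∃ x ∈ V, ∃ y ∈ lieDeg V (k + 1), z = ⁅x, y⁆} := rfl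

lemma lieDeg_map {M : Type*} [LieRing M] [LieAlgebra ℚ M]
    (F : L →ₗ[ℚ] M) (hF : ∀ x y, F ⁅x, y⁆ = ⁅F x, F y⁆)
    (V : Submodule ℚ L) : ∀ k, (lieDeg V k).map F = lieDeg (V.map F) k
  | 0 => by rw [lieDeg_zero, lieDeg_zero, Submodule.map_bot]
  | 1 => by rw [lieDeg_one, lieDeg_one]
  | (k + 2) => by
    rw [lieDeg_succ_succ, lieDeg_succ_succ, Submodule.map_span]
    congr 1
    ext z
    constructor
    · rintro ⟨w, ⟨x, hx, y, hy, rfl⟩, rfl⟩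
      refine ⟨F x, Submodule.mem_map_of_mem hx, F y, ?_, (hF x y)⟩
      rw [← lieDeg_map F hF V (k + 1)]
      exact Submodule.mem_map_of_mem hy
    · rintro ⟨x', ⟨x, hx, rfl⟩, y', hy', rfl⟩
      rw [← lieDeg_map F hF V (k + 1)] at hy'
      obtain ⟨y, hy, rfl⟩ := hy'
      exact ⟨⁅x, y⁆, ⟨x, hx, y, hy, rfl⟩, hF x y⟩

end LieHelpers

section IotaHelpers

variable {G : Type u} [Group G] {H : Type v} [LieRing H] [LieAlgebra ℚ H]
  {ι : G → H}

lemma iota_commutator_zero (hH : IsHolonomy G H ι) {z : G}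
    (hz : z ∈ commutator G) : ι z = 0 :=
  (hH.ker z).mpr ⟨1, one_pos, by simpa using hz⟩

lemma iota_eq_of_mk_eq (hH : IsHolonomy G H ι) {k : ℕ} (hk : 2 ≤ k) {a b : G}
    (h : (QuotientGroup.mk a : G ⧸ gammaP G k) = QuotientGroup.mk b) :
    ι a = ι b := by
  have hm : a⁻¹ * b ∈ commutator G := by
    rw [← gammaP_two_eq]
    exact gammaP_le_of_le hk (QuotientGroup.eq.mp h)
  have : ι b = ι (a * (a⁻¹ * b)) := by rw [mul_inv_cancel_left]
  rw [this, hH.map_mul, iota_commutator_zero hH hm, add_zero]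

lemma iota_mk_out (hH : IsHolonomy G H ι) {k : ℕ} (hk : 2 ≤ k) (g : G) :
    ι ((QuotientGroup.mk g : G ⧸ gammaP G k).out) = ι g :=
  iota_eq_of_mk_eq hH hk (QuotientGroup.out_eq' _)

lemma iota_out_mul (hH : IsHolonomy G H ι) {k : ℕ} (hk : 2 ≤ k)
    (q r : G ⧸ gammaP G k) : ι ((q * r).out) = ι q.out + ι r.out := by
  have h1 : (QuotientGroup.mk ((q * r).out) : G ⧸ gammaP G k)
      = QuotientGroup.mk (q.out * r.out) := by
    rw [QuotientGroup.out_eq', QuotientGroup.mk_mul, QuotientGroup.out_eq',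
      QuotientGroup.out_eq']
  rw [iota_eq_of_mk_eq hH hk h1, hH.map_mul]

end IotaHelpers

/-- Proposition 6.8 of [Suciu–Wang].  For a finitely generated group
`G`:  `𝔥(G/Γ₂G) ≅ 𝔥(G)/𝔥(G)′` (as graded Lie algebras), and for each `k ≥ 3` the
projection `G → G/Γ_kG` induces an isomorphism of graded Lie algebras
`𝔥(G) ≅ 𝔥(G/Γ_kG)`; in particular `𝔥(G)` depends only on `G/Γ₃G`. -/
theorem holonomy_nilpotent_quotients (G : Type u) [Group G] (hG : Group.FG G)
    (H : Type u) [LieRing H] [LieAlgebra ℚ H] (ι : G → H) (hH : IsHolonomy G H ι) :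
    (∀ (H₂ : Type u) [LieRing H₂] [LieAlgebra ℚ H₂]
        (ι₂ : (G ⧸ gammaP G 2) → H₂), IsHolonomy (G ⧸ gammaP G 2) H₂ ι₂ →
        IsGradedLieIso (holDeg ι₂)
          (fun k => (holDeg ι k).map
            (LieSubmodule.Quotient.mk' (LieAlgebra.derivedSeries ℚ H 1)).toLinearMap)) ∧
    (∀ k : ℕ, 3 ≤ k →
      ∀ (Hk : Type u) [LieRing Hk] [LieAlgebra ℚ Hk]
        (ιk : (G ⧸ gammaP G k) → Hk), IsHolonomy (G ⧸ gammaP G k) Hk ιk →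
        ∃ F : H →ₗ⁅ℚ⁆ Hk,
          (∀ g : G, F (ι g) = ιk (QuotientGroup.mk g)) ∧ Function.Bijective F ∧
          ∀ j, (holDeg ι j).map F.toLinearMap = holDeg ιk j) := by
  classical
  constructor
  · -- Part 1 : 𝔥(G/Γ₂G) ≅ 𝔥(G)/𝔥(G)′
    intro H₂ _ _ ι₂ hH₂
    set N : LieIdeal ℚ H := LieAlgebra.derivedSeries ℚ H 1 with hNdef
    have hNtop : N = ⁅(⊤ : LieIdeal ℚ H), (⊤ : LieIdeal ℚ H)⁆ := by
      rw [hNdef, LieAlgebra.derivedSeries_def, LieAlgebra.derivedSeriesOfIdeal_succ,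
        LieAlgebra.derivedSeriesOfIdeal_zero]
    have hcomm : ∀ a b : G ⧸ gammaP G 2, ⁅a, b⁆ = 1 := by
      intro a b
      obtain ⟨u, rfl⟩ := QuotientGroup.mk_surjective a
      obtain ⟨v, rfl⟩ := QuotientGroup.mk_surjective b
      show ⁅(QuotientGroup.mk' (gammaP G 2)) u, (QuotientGroup.mk' (gammaP G 2)) v⁆ = 1
      rw [← map_commutatorElement]
      exact (QuotientGroup.eq_one_iff _).mpr (commElt_mem_gammaP_two u v)
    have htrivQ2 : ∀ s c x y, GrTrivial (G ⧸ gammaP G 2) s c x y := by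
      intro s c x y
      unfold GrTrivial
      have hz : ∀ i : ℕ,
          grCls (G ⧸ gammaP G 2) 2 ⟨⁅x i, y i⁆, commElt_mem_gammaP_two _ _⟩ = 0 := by
        intro i
        apply grCls_zero_of_mem
        show ⁅x i, y i⁆ ∈ gammaP (G ⧸ gammaP G 2) 3
        rw [hcomm]
        exact Subgroup.one_mem _
      simp [hz]
    have hbr2 : ∀ a b : G ⧸ gammaP G 2, ⁅ι₂ a, ι₂ b⁆ = 0 := by
      intro a b
      have := hH₂.rel {0} (fun _ => 1) (fun _ => a) (fun _ => b) (htrivQ2 _ _ _ _)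
      simpa using this
    have hab : ∀ u v : H₂, ⁅u, v⁆ = 0 := by
      refine bracket_eq_zero_of_gen _ hH₂.gen ?_
      rintro _ ⟨a, rfl⟩ _ ⟨b, rfl⟩
      exact hbr2 a b
    obtain ⟨E, hE, -⟩ := hH.univ H₂ (fun g => ι₂ (QuotientGroup.mk g))
      (fun a b => hH₂.map_mul (QuotientGroup.mk a) (QuotientGroup.mk b))
      (fun s c x y _ => by simp [hbr2])
    have hNker : N ≤ E.ker := by
      rw [hNtop, LieSubmodule.lie_le_iff]
      intro u _ v _
      rw [LieHom.mem_ker, LieHom.map_lie]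
      exact hab _ _
    have hNsub : N.toSubmodule ≤ LinearMap.ker E.toLinearMap := by
      intro u hu
      rw [LinearMap.mem_ker]
      exact LieHom.mem_ker.mp (hNker hu)
    let Ebar0 : (H ⧸ N) →ₗ[ℚ] H₂ := Submodule.liftQ N.toSubmodule E.toLinearMap hNsub
    have hEbar0 : ∀ u : H, Ebar0 (LieSubmodule.Quotient.mk' N u) = E u := fun u => rfl
    have hmkbr : ∀ u v : H, ⁅LieSubmodule.Quotient.mk' N u, LieSubmodule.Quotient.mk' N v⁆
        = LieSubmodule.Quotient.mk' N ⁅u, v⁆ :=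
      fun u v => (LieSubmodule.Quotient.mk_bracket (I := N) u v).symm
    let Ebar : (H ⧸ N) →ₗ⁅ℚ⁆ H₂ :=
      { Ebar0 with
        map_lie' := by
          intro z w
          obtain ⟨u, rfl⟩ := LieSubmodule.Quotient.surjective_mk' N z
          obtain ⟨v, rfl⟩ := LieSubmodule.Quotient.surjective_mk' N w
          show Ebar0 ⁅LieSubmodule.Quotient.mk' N u, LieSubmodule.Quotient.mk' N v⁆
            = ⁅Ebar0 (LieSubmodule.Quotient.mk' N u), Ebar0 (LieSubmodule.Quotient.mk' N v)⁆
          rw [hmkbr, hEbar0, hEbar0, hEbar0, E.map_lie] }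
    have hEbar : ∀ u : H, Ebar (LieSubmodule.Quotient.mk' N u) = E u := fun u => rfl
    have hzero : ∀ u v : H,
        (⁅LieSubmodule.Quotient.mk (N := N) u, LieSubmodule.Quotient.mk (N := N) v⁆
          : H ⧸ N) = 0 := by
      intro u v
      rw [← LieSubmodule.Quotient.mk_bracket (I := N), LieSubmodule.Quotient.mk_eq_zero',
        hNtop]
      exact LieSubmodule.lie_mem_lie (LieSubmodule.mem_top u) (LieSubmodule.mem_top v)
    obtain ⟨F₂, hF₂, -⟩ := hH₂.univ (H ⧸ N)
      (fun q => LieSubmodule.Quotient.mk' N (ι q.out))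
      (fun a b => by
        show LieSubmodule.Quotient.mk' N (ι ((a * b).out))
          = LieSubmodule.Quotient.mk' N (ι a.out) + LieSubmodule.Quotient.mk' N (ι b.out)
        rw [iota_out_mul hH (le_refl 2), map_add])
      (fun s c x y _ => by simp [hzero])
    let piLie : H →ₗ⁅ℚ⁆ (H ⧸ N) :=
      { (LieSubmodule.Quotient.mk' N).toLinearMap with
        map_lie' := by
          intro u v
          exact LieSubmodule.Quotient.mk_bracket (I := N) u v }
    have hpi : ∀ u : H, piLie u = LieSubmodule.Quotient.mk' N u := fun u => rfl
    have hEF : ∀ t : H₂, Ebar (F₂ t) = t := by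
      intro t
      have hext := lieHom_ext_of_lieSpan (Ebar.comp F₂) (LieHom.id) (Set.range ι₂) hH₂.gen ?_ t
      · simpa using hext
      · rintro _ ⟨q, rfl⟩
        show Ebar (F₂ (ι₂ q)) = ι₂ q
        rw [hF₂, hEbar, hE, QuotientGroup.out_eq']
    have hFE : ∀ z : H ⧸ N, F₂ (Ebar z) = z := by
      have hext := lieHom_ext_of_lieSpan ((F₂.comp Ebar).comp piLie) piLie
        (Set.range ι) hH.gen ?_
      · intro z
        obtain ⟨u, rfl⟩ := LieSubmodule.Quotient.surjective_mk' N z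
        exact hext u
      · rintro _ ⟨g, rfl⟩
        show F₂ (Ebar (piLie (ι g))) = piLie (ι g)
        rw [hpi, hEbar, hE, hF₂]
        exact congrArg _ (iota_mk_out hH (le_refl 2) g)
    have hbij : Function.Bijective F₂ :=
      ⟨Function.LeftInverse.injective hEF, Function.RightInverse.surjective hFE⟩
    refine ⟨LieEquiv.ofBijective F₂ hbij, fun k => ?_⟩
    have hcoe : (LieEquiv.ofBijective F₂ hbij).toLinearEquiv.toLinearMap = F₂.toLinearMap := rfl
    rw [hcoe]
    show (lieDeg (Submodule.span ℚ (Set.range ι₂)) k).map F₂.toLinearMap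
      = (lieDeg (Submodule.span ℚ (Set.range ι)) k).map
          (LieSubmodule.Quotient.mk' N).toLinearMap
    rw [lieDeg_map F₂.toLinearMap (fun a b => F₂.map_lie a b),
      lieDeg_map (LieSubmodule.Quotient.mk' N).toLinearMap
        (fun a b => LieSubmodule.Quotient.mk_bracket (I := N) a b)]
    congr 1
    rw [Submodule.map_span, Submodule.map_span]
    congr 1
    ext z
    constructor
    · rintro ⟨_, ⟨q, rfl⟩, rfl⟩
      exact ⟨ι q.out, ⟨q.out, rfl⟩, (hF₂ q).symm⟩
    · rintro ⟨_, ⟨g, rfl⟩, rfl⟩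
      refine ⟨ι₂ (QuotientGroup.mk g), ⟨QuotientGroup.mk g, rfl⟩, ?_⟩
      show F₂ (ι₂ (QuotientGroup.mk g)) = LieSubmodule.Quotient.mk' N (ι g)
      rw [hF₂]
      exact congrArg _ (iota_mk_out hH (le_refl 2) g)
  · -- Part 2 : 𝔥(G) ≅ 𝔥(G/Γ_kG) for k ≥ 3
    intro k hk Hk _ _ ιk hHk
    have hk2 : (2 : ℕ) ≤ k := by omega
    obtain ⟨F, hF, -⟩ := hH.univ Hk (fun g => ιk (QuotientGroup.mk g))
      (fun a b => hHk.map_mul (QuotientGroup.mk a) (QuotientGroup.mk b))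
      (fun s c x y hxy => by
        have h1 := grTrivial_map (QuotientGroup.mk' (gammaP G k)) s c x y hxy
        exact hHk.rel s c _ _ h1)
    have hker3 : (QuotientGroup.mk' (gammaP G k)).ker ≤ gammaP G 3 := by
      rw [QuotientGroup.ker_mk']
      exact gammaP_le_of_le hk
    obtain ⟨F', hF', -⟩ := hHk.univ H (fun q => ι q.out)
      (fun a b => iota_out_mul hH hk2 a b)
      (fun s c x y hxy =>
        hH.rel s c _ _ (grTrivial_lift (QuotientGroup.mk' (gammaP G k))
          (QuotientGroup.mk'_surjective _) hker3 s c x y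
          (fun i => (x i).out) (fun i => (y i).out)
          (fun i => QuotientGroup.out_eq' _) (fun i => QuotientGroup.out_eq' _) hxy))
    obtain ⟨Fid, hFid, hFuniq⟩ := hH.univ H ι hH.map_mul hH.rel
    obtain ⟨Fidk, hFidk, hFuniqk⟩ := hHk.univ Hk ιk hHk.map_mul hHk.rel
    have hleft : ∀ u : H, F' (F u) = u := by
      have h1 : F'.comp F = Fid := hFuniq _ (fun g => by
        show F' (F (ι g)) = ι g
        rw [hF, hF']
        exact iota_mk_out hH hk2 g)
      have h2 : LieHom.id = Fid := hFuniq _ (fun g => rfl)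
      intro u
      calc F' (F u) = (F'.comp F) u := rfl
        _ = Fid u := by rw [h1]
        _ = (LieHom.id : H →ₗ⁅ℚ⁆ H) u := by rw [h2]
        _ = u := rfl
    have hright : ∀ t : Hk, F (F' t) = t := by
      have h1 : F.comp F' = Fidk := hFuniqk _ (fun q => by
        show F (F' (ιk q)) = ιk q
        rw [hF', hF, QuotientGroup.out_eq'])
      have h2 : LieHom.id = Fidk := hFuniqk _ (fun q => rfl)
      intro t
      calc F (F' t) = (F.comp F') t := rfl
        _ = Fidk t := by rw [h1]
        _ = (LieHom.id : Hk →ₗ⁅ℚ⁆ Hk) t := by rw [h2]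
        _ = t := rfl
    refine ⟨F, hF, ⟨Function.LeftInverse.injective hleft,
      Function.RightInverse.surjective hright⟩, ?_⟩
    intro j
    show (lieDeg (Submodule.span ℚ (Set.range ι)) j).map F.toLinearMap
      = lieDeg (Submodule.span ℚ (Set.range ιk)) j
    rw [lieDeg_map F.toLinearMap (fun a b => F.map_lie a b)]
    congr 1
    rw [Submodule.map_span]
    congr 1
    ext z
    constructor
    · rintro ⟨_, ⟨g, rfl⟩, rfl⟩
      refine ⟨QuotientGroup.mk g, ?_⟩
      exact (hF g).symm
    · rintro ⟨q, rfl⟩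
      refine ⟨ι q.out, ⟨q.out, rfl⟩, ?_⟩
      show F (ι q.out) = ιk q
      rw [hF, QuotientGroup.out_eq']

end ArXiv170107768
end
end

section
/- Let G be a finitely generated group with derived series G^{(0)} = G, G^{(i+1)} = [G^{(i)}, G^{(i)}]. Then 𝔥(G/G^{(1)}) ≅ 𝔥(G)/𝔥(G)′, and for every i ≥ 2 the projection G → G/G^{(i)} induces an isomorphism of graded Lie algebras 𝔥(G) ≅ 𝔥(G/G^{(i)}). -/
open TensorProduct
open scoped commutatorElement

noncomputable section

namespace ArXiv170107768

universe u

instance (G : Type u) [Group G] (n : ℕ) : (derivedSeries G n).Normal :=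
  derivedSeries_normal G n

/-! ### Auxiliary lemmas -/

section AuxGroup

variable {Gg : Type*} [Group Gg]

lemma aux_lcs_map_eq {G₁ G₂ : Type*} [Group G₁] [Group G₂] (f : G₁ →* G₂)
    (hf : Function.Surjective f) (n : ℕ) :
    ((⊤ : Subgroup G₁).lowerCentralSeries n).map f = (⊤ : Subgroup G₂).lowerCentralSeries n := by
  induction n with
  | zero => simpa using Subgroup.map_top_of_surjective f hf
  | succ n ih =>
      show Subgroup.map f ⁅(⊤ : Subgroup G₁).lowerCentralSeries n, ⊤⁆ = ⁅(⊤ : Subgroup G₂).lowerCentralSeries n, ⊤⁆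
      rw [Subgroup.map_commutator, ih, Subgroup.map_top_of_surjective f hf]

lemma aux_derivedSeries_antitone {m n : ℕ} (h : m ≤ n) :
    derivedSeries Gg n ≤ derivedSeries Gg m := by
  induction n, h using Nat.le_induction with
  | base => exact le_rfl
  | succ n hmn ih =>
      refine le_trans ?_ ih
      rw [derivedSeries_succ]
      exact @Subgroup.commutator_le_left _ _ _ _ (derivedSeries_normal _ _)

lemma aux_derivedSeries_le_lcs_two {i : ℕ} (hi : 2 ≤ i) :
    derivedSeries Gg i ≤ (⊤ : Subgroup Gg).lowerCentralSeries 2 := by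
  refine le_trans (aux_derivedSeries_antitone hi) ?_
  show ⁅derivedSeries Gg 1, derivedSeries Gg 1⁆ ≤ ⁅(⊤ : Subgroup Gg).lowerCentralSeries 1, ⊤⁆
  exact Subgroup.commutator_mono (le_of_eq (derivedSeries_one Gg)) le_top

lemma aux_derivedSeries_le_commutator {i : ℕ} (hi : 1 ≤ i) :
    derivedSeries Gg i ≤ commutator Gg :=
  le_trans (aux_derivedSeries_antitone hi) (le_of_eq (derivedSeries_one Gg))

lemma aux_mk_mem_gammaP {N : Subgroup Gg} [N.Normal] {k : ℕ} (x : Gg) (hx : x ∈ gammaP Gg k) :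
    (QuotientGroup.mk x : Gg ⧸ N) ∈ gammaP (Gg ⧸ N) k :=
  Subgroup.lowerCentralSeries.map (QuotientGroup.mk' N) (k - 1)
    (Subgroup.mem_map.mpr ⟨x, hx, rfl⟩)

end AuxGroup

section AuxLie

variable {L L₁ L₂ : Type*} [LieRing L] [LieAlgebra ℚ L] [LieRing L₁] [LieAlgebra ℚ L₁]
  [LieRing L₂] [LieAlgebra ℚ L₂]

lemma aux_lieDeg_map (F : L₁ →ₗ⁅ℚ⁆ L₂) (V : Submodule ℚ L₁) :
    ∀ k, (lieDeg V k).map F.toLinearMap = lieDeg (V.map F.toLinearMap) k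
  | 0 => by simp [lieDeg]
  | 1 => rfl
  | (k + 2) => by
      show (Submodule.span ℚ {z | ∃ x ∈ V, ∃ y ∈ lieDeg V (k + 1), z = ⁅x, y⁆}).map
            F.toLinearMap
          = Submodule.span ℚ {z | ∃ x ∈ V.map F.toLinearMap,
              ∃ y ∈ lieDeg (V.map F.toLinearMap) (k + 1), z = ⁅x, y⁆}
      rw [Submodule.map_span]
      congr 1
      have hk := aux_lieDeg_map F V (k + 1)
      ext z
      constructor
      · rintro ⟨w, ⟨a, ha, b, hb, rfl⟩, rfl⟩
        exact ⟨F a, Submodule.mem_map_of_mem ha,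
          F b, hk ▸ Submodule.mem_map_of_mem hb, (F.map_lie a b)⟩
      · rintro ⟨x', hx', y', hy', rfl⟩
        obtain ⟨a, ha, rfl⟩ := hx'
        rw [← hk] at hy'
        obtain ⟨b, hb, rfl⟩ := hy'
        exact ⟨⁅a, b⁆, ⟨a, ha, b, hb, rfl⟩, F.map_lie a b⟩

/-- The centralizer `{y | ⁅x, y⁆ = 0}` as a Lie subalgebra. -/
def auxCentL (x : L) : LieSubalgebra ℚ L where
  carrier := {y | ⁅x, y⁆ = 0}
  add_mem' := fun {a b} ha hb => by
    simp only [Set.mem_setOf_eq] at *; rw [lie_add, ha, hb, add_zero]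
  zero_mem' := lie_zero x
  smul_mem' := fun c a ha => by
    simp only [Set.mem_setOf_eq] at *; rw [lie_smul, ha, smul_zero]
  lie_mem' := fun {a b} ha hb => by
    simp only [Set.mem_setOf_eq] at *
    rw [leibniz_lie, ha, hb, zero_lie, lie_zero, add_zero]

/-- The right centralizer `{a | ⁅a, y⁆ = 0}` as a Lie subalgebra. -/
def auxCentR (y : L) : LieSubalgebra ℚ L where
  carrier := {a | ⁅a, y⁆ = 0}
  add_mem' := fun {a b} ha hb => by
    simp only [Set.mem_setOf_eq] at *; rw [add_lie, ha, hb, add_zero]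
  zero_mem' := zero_lie y
  smul_mem' := fun c a ha => by
    simp only [Set.mem_setOf_eq] at *; rw [smul_lie, ha, smul_zero]
  lie_mem' := fun {a b} ha hb => by
    simp only [Set.mem_setOf_eq] at *
    rw [lie_lie, ha, hb, lie_zero, lie_zero, sub_zero]

lemma aux_abelian_of_gen (S : Set L) (hspan : LieSubalgebra.lieSpan ℚ L S = ⊤)
    (hb : ∀ x ∈ S, ∀ y ∈ S, ⁅x, y⁆ = 0) (x y : L) : ⁅x, y⁆ = 0 := by
  have step1 : ∀ a ∈ S, ∀ z : L, ⁅a, z⁆ = 0 := by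
    intro a ha z
    have h1 : LieSubalgebra.lieSpan ℚ L S ≤ auxCentL a :=
      LieSubalgebra.lieSpan_le.mpr fun w hw => hb a ha w hw
    rw [hspan] at h1
    exact h1 (LieSubalgebra.mem_top z)
  have h2 : LieSubalgebra.lieSpan ℚ L S ≤ auxCentR y :=
    LieSubalgebra.lieSpan_le.mpr fun a ha => step1 a ha y
  rw [hspan] at h2
  exact h2 (LieSubalgebra.mem_top x)

lemma aux_coe_lieSpan_eq_span (hab : ∀ x y : L, ⁅x, y⁆ = 0) (S : Set L) :
    (LieSubalgebra.lieSpan ℚ L S : Submodule ℚ L) = Submodule.span ℚ S := by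
  apply le_antisymm
  · have hK : LieSubalgebra.lieSpan ℚ L S ≤
        ({ toSubmodule := Submodule.span ℚ S,
           lie_mem' := fun {a b} _ _ => by
             rw [hab a b]; exact (Submodule.span ℚ S).zero_mem } : LieSubalgebra ℚ L) :=
      LieSubalgebra.lieSpan_le.mpr Submodule.subset_span
    exact fun x hx => hK hx
  · exact Submodule.span_le.mpr (LieSubalgebra.subset_lieSpan)

lemma aux_map_span_eq_top (F : L₁ →ₗ⁅ℚ⁆ L₂) (hsurj : Function.Surjective F)
    (hab : ∀ x y : L₂, ⁅x, y⁆ = 0) (S : Set L₁)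
    (hspan : LieSubalgebra.lieSpan ℚ L₁ S = ⊤) :
    (Submodule.span ℚ S).map F.toLinearMap = ⊤ := by
  rw [Submodule.map_span]
  set K : LieSubalgebra ℚ L₁ :=
    { toSubmodule := (Submodule.span ℚ (F.toLinearMap '' S)).comap F.toLinearMap,
      lie_mem' := fun {a b} _ _ => by
        exact Submodule.mem_comap.mpr (by
          rw [show F.toLinearMap ⁅a, b⁆ = F ⁅a, b⁆ from rfl, F.map_lie, hab]
          exact Submodule.zero_mem _) } with hKdef
  have hS : S ⊆ K := fun a ha =>
    Submodule.subset_span (Set.mem_image_of_mem _ ha)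
  have hle : LieSubalgebra.lieSpan ℚ L₁ S ≤ K := LieSubalgebra.lieSpan_le.mpr hS
  rw [hspan] at hle
  rw [eq_top_iff]
  rintro z -
  obtain ⟨w, rfl⟩ := hsurj z
  exact hle (LieSubalgebra.mem_top w)

end AuxLie

section AuxGrQ

variable {Gg : Type*} [Group Gg]

lemma aux_grCls_one (k : ℕ) : grCls Gg k 1 = 0 := by
  unfold grCls
  rw [show ((QuotientGroup.mk (1 : gammaP Gg k)) : lcsQuot Gg k) = 1 from rfl]
  show (1 : ℚ) ⊗ₜ[ℤ] Additive.ofMul (Abelianization.of (1 : lcsQuot Gg k)) = 0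
  rw [show Abelianization.of (1 : lcsQuot Gg k) = 1 from map_one _]
  rw [show Additive.ofMul (1 : Abelianization (lcsQuot Gg k)) = 0 from rfl]
  exact TensorProduct.tmul_zero _ _

/-- The map `Γ_k G → Γ_k (G/N)` induced by the projection. -/
def auxGammaMk (N : Subgroup Gg) [N.Normal] (k : ℕ) :
    gammaP Gg k →* gammaP (Gg ⧸ N) k :=
  MonoidHom.mk' (fun x => ⟨QuotientGroup.mk (x : Gg), aux_mk_mem_gammaP _ x.2⟩)
    (fun x y => Subtype.ext (by
      show (QuotientGroup.mk ((x : Gg) * (y : Gg)) : Gg ⧸ N) = _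
      rw [QuotientGroup.mk_mul]
      rfl))

/-- The map `Γ_k G/Γ_{k+1} G → Γ_k (G/N)/Γ_{k+1} (G/N)` induced by the projection. -/
def auxLcsQuotMk (N : Subgroup Gg) [N.Normal] (k : ℕ) :
    lcsQuot Gg k →* lcsQuot (Gg ⧸ N) k :=
  QuotientGroup.map _ _ (auxGammaMk N k) (by
    intro x hx
    rw [Subgroup.mem_subgroupOf] at hx
    rw [Subgroup.mem_comap, Subgroup.mem_subgroupOf]
    exact aux_mk_mem_gammaP _ hx)

lemma aux_lcsQuotMk_bijective (N : Subgroup Gg) [N.Normal]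
    (hN : N ≤ (⊤ : Subgroup Gg).lowerCentralSeries 2) :
    Function.Bijective (auxLcsQuotMk N 2) := by
  constructor
  · rw [injective_iff_map_eq_one]
    intro a
    induction a using QuotientGroup.induction_on with
    | H x =>
      intro h
      have h : (QuotientGroup.mk (auxGammaMk N 2 x) : lcsQuot (Gg ⧸ N) 2) = 1 := h
      rw [QuotientGroup.eq_one_iff, Subgroup.mem_subgroupOf] at h
      show (QuotientGroup.mk x : (gammaP Gg 2) ⧸ ((gammaP Gg (2 + 1)).subgroupOf (gammaP Gg 2))) = 1
      rw [QuotientGroup.eq_one_iff, Subgroup.mem_subgroupOf]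
      have h2 : ((auxGammaMk N 2) x : Gg ⧸ N) ∈
          ((⊤ : Subgroup Gg).lowerCentralSeries 2).map (QuotientGroup.mk' N) := by
        rw [aux_lcs_map_eq (QuotientGroup.mk' N) (QuotientGroup.mk'_surjective N) 2]
        exact h
      obtain ⟨y, hy, hxy⟩ := Subgroup.mem_map.mp h2
      have hyx : (QuotientGroup.mk y : Gg ⧸ N) = QuotientGroup.mk (x : Gg) := hxy
      have hmem : y⁻¹ * (x : Gg) ∈ N := by
        rw [QuotientGroup.eq] at hyx
        exact hyx
      have : (x : Gg) = y * (y⁻¹ * (x : Gg)) := by group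
      show (x : Gg) ∈ gammaP Gg 3
      rw [this]
      exact mul_mem hy (hN hmem)
  · intro b
    induction b using QuotientGroup.induction_on with
    | H z =>
      have hz : (z : Gg ⧸ N) ∈ ((⊤ : Subgroup Gg).lowerCentralSeries 1).map (QuotientGroup.mk' N) := by
        rw [aux_lcs_map_eq (QuotientGroup.mk' N) (QuotientGroup.mk'_surjective N) 1]
        exact z.2
      obtain ⟨x, hx, hxz⟩ := Subgroup.mem_map.mp hz
      refine ⟨QuotientGroup.mk (⟨x, hx⟩ : gammaP Gg 2), ?_⟩
      show (QuotientGroup.mk (auxGammaMk N 2 ⟨x, hx⟩) : lcsQuot (Gg ⧸ N) 2)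
        = QuotientGroup.mk z
      exact congrArg QuotientGroup.mk (Subtype.ext hxz)

/-- Abelianizations of isomorphic groups are isomorphic. -/
def auxAbEquiv {Q₁ Q₂ : Type*} [Group Q₁] [Group Q₂] (e : Q₁ ≃* Q₂) :
    Abelianization Q₁ ≃* Abelianization Q₂ :=
  MonoidHom.toMulEquiv (Abelianization.map e.toMonoidHom)
    (Abelianization.map e.symm.toMonoidHom)
    (Abelianization.hom_ext _ _ (MonoidHom.ext fun x => by
      simp [Abelianization.map_of]))
    (Abelianization.hom_ext _ _ (MonoidHom.ext fun x => by
      simp [Abelianization.map_of]))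

/-- The isomorphism `gr₂(G;ℚ) ≃ gr₂(G/N;ℚ)` when `N ≤ Γ₃G`. -/
def auxGrQEquiv (N : Subgroup Gg) [N.Normal] (hN : N ≤ (⊤ : Subgroup Gg).lowerCentralSeries 2) :
    grQ Gg 2 ≃ₗ[ℚ] grQ (Gg ⧸ N) 2 :=
  LinearEquiv.baseChange ℤ ℚ _ _
    ((MulEquiv.toAdditive (auxAbEquiv
      (MulEquiv.ofBijective (auxLcsQuotMk N 2)
        (aux_lcsQuotMk_bijective N hN)))).toIntLinearEquiv)

lemma aux_grQEquiv_grCls (N : Subgroup Gg) [N.Normal]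
    (hN : N ≤ (⊤ : Subgroup Gg).lowerCentralSeries 2) (x : gammaP Gg 2) :
    auxGrQEquiv N hN (grCls Gg 2 x)
      = grCls (Gg ⧸ N) 2 ⟨QuotientGroup.mk (x : Gg), aux_mk_mem_gammaP _ x.2⟩ := by
  unfold grCls auxGrQEquiv LinearEquiv.baseChange
  exact (TensorProduct.AlgebraTensorModule.congr_tmul
    (LinearEquiv.refl ℚ ℚ) _ 1 _).trans rfl

lemma aux_grTrivial_quot_iff (N : Subgroup Gg) [N.Normal]
    (hN : N ≤ (⊤ : Subgroup Gg).lowerCentralSeries 2) (s : Finset ℕ) (c : ℕ → ℚ) (x y : ℕ → Gg) :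
    GrTrivial Gg s c x y ↔
      GrTrivial (Gg ⧸ N) s c (fun j => QuotientGroup.mk (x j))
        (fun j => QuotientGroup.mk (y j)) := by
  unfold GrTrivial
  have key : (auxGrQEquiv N hN)
      (∑ i ∈ s, c i • grCls Gg 2 ⟨⁅x i, y i⁆, commElt_mem_gammaP_two _ _⟩)
      = ∑ i ∈ s, c i • grCls (Gg ⧸ N) 2
          ⟨⁅QuotientGroup.mk (x i), QuotientGroup.mk (y i)⁆,
            commElt_mem_gammaP_two _ _⟩ := by
    rw [map_sum]
    refine Finset.sum_congr rfl fun i _ => ?_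
    rw [LinearEquiv.map_smul, aux_grQEquiv_grCls]
    refine congrArg _ (congrArg _ (Subtype.ext ?_))
    exact map_commutatorElement (QuotientGroup.mk' N) (x i) (y i)
  rw [← LinearEquiv.map_eq_zero_iff (auxGrQEquiv N hN), key]

end AuxGrQ

section AuxHolonomy

universe v

variable {G : Type v} [Group G] {H : Type v} [LieRing H] [LieAlgebra ℚ H] {ι : G → H}

lemma aux_holonomy_ext (hH : IsHolonomy G H ι) {M : Type v} [LieRing M] [LieAlgebra ℚ M]
    (F₁ F₂ : H →ₗ⁅ℚ⁆ M) (h : ∀ g, F₁ (ι g) = F₂ (ι g)) : F₁ = F₂ := by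
  obtain ⟨F, -, hFuniq⟩ := hH.univ M (fun g => F₁ (ι g))
    (fun a b => by show F₁ (ι (a * b)) = F₁ (ι a) + F₁ (ι b)
                   rw [hH.map_mul, map_add F₁])
    (fun s c x y hxy => by
      have h0 := hH.rel s c x y hxy
      have key : F₁.toLinearMap (∑ i ∈ s, c i • ⁅ι (x i), ι (y i)⁆)
          = ∑ i ∈ s, c i • ⁅F₁ (ι (x i)), F₁ (ι (y i))⁆ := by
        rw [map_sum]
        exact Finset.sum_congr rfl fun i _ => by
          rw [LinearMap.map_smul]
          exact congrArg _ (F₁.map_lie _ _)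
      show ∑ i ∈ s, c i • ⁅F₁ (ι (x i)), F₁ (ι (y i))⁆ = 0
      rw [← key, h0, LinearMap.map_zero])
  rw [hFuniq F₁ (fun g => rfl), hFuniq F₂ (fun g => (h g).symm)]

lemma aux_ι_eq_zero (hH : IsHolonomy G H ι) {g : G} (hg : g ∈ commutator G) :
    ι g = 0 :=
  (hH.ker g).mpr ⟨1, one_pos, by simpa using hg⟩

/-- Descend `ι` (or a composition thereof) along a quotient by a subgroup on which it
vanishes. -/
lemma aux_quot_lift {M : Type*} [AddCommGroup M] (N : Subgroup G) [N.Normal]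
    (θ : G → M) (hθ : ∀ a b : G, θ (a * b) = θ a + θ b) (hker : ∀ n ∈ N, θ n = 0) :
    ∃ f : G ⧸ N → M, (∀ g : G, f (QuotientGroup.mk g) = θ g) ∧
      (∀ a b : G ⧸ N, f (a * b) = f a + f b) := by
  have h1 : θ 1 = 0 := by
    have := hθ 1 1
    rw [mul_one] at this
    exact left_eq_add.mp this
  let θm : G →* Multiplicative M :=
    { toFun := fun g => Multiplicative.ofAdd (θ g)
      map_one' := by show Multiplicative.ofAdd (θ 1) = 1
                     rw [h1]; rfl
      map_mul' := fun a b => by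
        show Multiplicative.ofAdd (θ (a * b))
          = Multiplicative.ofAdd (θ a) * Multiplicative.ofAdd (θ b)
        rw [hθ]; rfl }
  have hNker : N ≤ θm.ker := fun n hn => by
    show Multiplicative.ofAdd (θ n) = 1
    rw [hker n hn]; rfl
  refine ⟨fun a => Multiplicative.toAdd (QuotientGroup.lift N θm hNker a), fun g => rfl, ?_⟩
  intro a b
  induction a using QuotientGroup.induction_on with
  | H g =>
    induction b using QuotientGroup.induction_on with
    | H g' =>
      show Multiplicative.toAdd (QuotientGroup.lift N θm hNker
        (QuotientGroup.mk (g * g'))) = _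
      rw [QuotientGroup.lift_mk]
      show θ (g * g') = _
      rw [hθ]
      rfl

end AuxHolonomy

section AuxMain

variable {G : Type u} [Group G] {H : Type u} [LieRing H] [LieAlgebra ℚ H] {ι : G → H}

lemma aux_holonomy_bracket_zero (hH : IsHolonomy G H ι)
    (hcomm : ∀ a b : G, ⁅a, b⁆ = (1 : G)) (a b : G) : ⁅ι a, ι b⁆ = 0 := by
  have hrel := hH.rel {0} (fun _ => 1) (fun _ => a) (fun _ => b) (by
    unfold GrTrivial
    rw [Finset.sum_singleton]
    rw [show (⟨⁅a, b⁆, commElt_mem_gammaP_two a b⟩ : gammaP G 2) = 1 from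
      Subtype.ext (hcomm a b)]
    rw [aux_grCls_one, smul_zero])
  rw [Finset.sum_singleton, one_smul] at hrel
  exact hrel

/-- Part 1 of the statement. -/
lemma aux_part1 (hH : IsHolonomy G H ι)
    (H₁ : Type u) [LieRing H₁] [LieAlgebra ℚ H₁]
    (ι₁ : (G ⧸ derivedSeries G 1) → H₁)
    (h₁ : IsHolonomy (G ⧸ derivedSeries G 1) H₁ ι₁) :
    IsGradedLieIso (holDeg ι₁)
      (fun k => (holDeg ι k).map
        (LieSubmodule.Quotient.mk' (LieAlgebra.derivedSeries ℚ H 1)).toLinearMap) := by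
  -- the quotient group is abelian
  have hAcomm : ∀ a b : G ⧸ derivedSeries G 1, ⁅a, b⁆ = 1 := by
    intro a b
    induction a using QuotientGroup.induction_on with
    | H g =>
      induction b using QuotientGroup.induction_on with
      | H g' =>
        show ⁅QuotientGroup.mk' (derivedSeries G 1) g,
          QuotientGroup.mk' (derivedSeries G 1) g'⁆ = 1
        rw [← map_commutatorElement (QuotientGroup.mk' (derivedSeries G 1)) g g']
        rw [show QuotientGroup.mk' (derivedSeries G 1) ⁅g, g'⁆
            = QuotientGroup.mk ⁅g, g'⁆ from rfl,
          QuotientGroup.eq_one_iff, derivedSeries_one]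
        exact Subgroup.commutator_mem_commutator (Subgroup.mem_top g) (Subgroup.mem_top g')
  -- brackets of generators vanish
  have hbr : ∀ a b : G ⧸ derivedSeries G 1, ⁅ι₁ a, ι₁ b⁆ = 0 :=
    aux_holonomy_bracket_zero h₁ hAcomm
  -- H₁ is abelian
  have habH₁ : ∀ x y : H₁, ⁅x, y⁆ = 0 := by
    refine aux_abelian_of_gen _ h₁.gen ?_
    rintro x ⟨a, rfl⟩ y ⟨b, rfl⟩
    exact hbr a b
  -- the quotient map as a Lie algebra morphism
  let qLie : H →ₗ⁅ℚ⁆ H ⧸ LieAlgebra.derivedSeries ℚ H 1 :=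
    { toLinearMap := (LieSubmodule.Quotient.mk' (LieAlgebra.derivedSeries ℚ H 1)).toLinearMap
      map_lie' := rfl }
  have hqsurj : Function.Surjective qLie := fun z =>
    LieSubmodule.Quotient.surjective_mk' (N := LieAlgebra.derivedSeries ℚ H 1) z
  have hItop : LieAlgebra.derivedSeries ℚ H 1 = ⁅(⊤ : LieIdeal ℚ H), (⊤ : LieIdeal ℚ H)⁆ := by
    rw [LieAlgebra.derivedSeries_def, LieAlgebra.derivedSeriesOfIdeal_succ,
      LieAlgebra.derivedSeriesOfIdeal_zero]
  -- H ⧸ I is abelian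
  have habQ : ∀ x y : H ⧸ LieAlgebra.derivedSeries ℚ H 1, ⁅x, y⁆ = 0 := by
    intro x y
    obtain ⟨a, rfl⟩ := hqsurj x
    obtain ⟨b, rfl⟩ := hqsurj y
    rw [← qLie.map_lie]
    show LieSubmodule.Quotient.mk' (LieAlgebra.derivedSeries ℚ H 1) ⁅a, b⁆ = 0
    rw [LieSubmodule.Quotient.mk_eq_zero, hItop]
    exact LieSubmodule.lie_mem_lie (LieSubmodule.mem_top a) (LieSubmodule.mem_top b)
  -- the morphism H → H₁
  obtain ⟨F₂, hF₂, -⟩ := hH.univ H₁ (fun g => ι₁ (QuotientGroup.mk g))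
    (fun a b => by
      show ι₁ (QuotientGroup.mk (a * b)) = ι₁ (QuotientGroup.mk a) + ι₁ (QuotientGroup.mk b)
      rw [QuotientGroup.mk_mul, h₁.map_mul])
    (fun s c x y _ => by
      refine Finset.sum_eq_zero fun j _ => ?_
      show c j • ⁅ι₁ (QuotientGroup.mk (x j)), ι₁ (QuotientGroup.mk (y j))⁆ = 0
      rw [hbr, smul_zero])
  -- the morphism H₁ → H ⧸ I
  obtain ⟨fb, hfb, hfbadd⟩ := aux_quot_lift (derivedSeries G 1) (fun g => qLie (ι g))
    (fun a b => by
      show qLie (ι (a * b)) = qLie (ι a) + qLie (ι b)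
      rw [hH.map_mul, map_add qLie])
    (fun n hn => by
      show qLie (ι n) = 0
      rw [aux_ι_eq_zero hH (by rw [← derivedSeries_one (G := G)]; exact hn), map_zero qLie])
  obtain ⟨F₁, hF₁, -⟩ := h₁.univ (H ⧸ LieAlgebra.derivedSeries ℚ H 1) fb hfbadd
    (fun s c x y _ => by
      refine Finset.sum_eq_zero fun j _ => ?_
      rw [habQ, smul_zero])
  -- F₁ ∘ F₂ = qLie
  have hcomp1 : F₁.comp F₂ = qLie := by
    refine aux_holonomy_ext hH _ _ fun g => ?_
    show F₁ (F₂ (ι g)) = qLie (ι g)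
    rw [hF₂, hF₁, hfb]
  -- F₂ kills I and factors through H ⧸ I
  have hle : (LieAlgebra.derivedSeries ℚ H 1).toSubmodule ≤ LinearMap.ker F₂.toLinearMap := by
    intro z hz
    have hzI : z ∈ LieAlgebra.derivedSeries ℚ H 1 := hz
    rw [hItop] at hzI
    have hK : ⁅(⊤ : LieIdeal ℚ H), (⊤ : LieIdeal ℚ H)⁆ ≤
        ({ toSubmodule := LinearMap.ker F₂.toLinearMap
           lie_mem := fun {x m} _ => LinearMap.mem_ker.mpr (by
             rw [show F₂.toLinearMap ⁅x, m⁆ = F₂ ⁅x, m⁆ from rfl, F₂.map_lie, habH₁]) } :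
          LieSubmodule ℚ H H) := by
      rw [LieSubmodule.lie_le_iff]
      intro x _ m _
      exact LinearMap.mem_ker.mpr (by
        rw [show F₂.toLinearMap ⁅x, m⁆ = F₂ ⁅x, m⁆ from rfl, F₂.map_lie, habH₁])
    exact hK hzI
  have happ : ∀ (c : H),
      Submodule.liftQ (LieAlgebra.derivedSeries ℚ H 1).toSubmodule F₂.toLinearMap hle
        (qLie c) = F₂ c :=
    fun _ => rfl
  let F₂' : (H ⧸ LieAlgebra.derivedSeries ℚ H 1) →ₗ⁅ℚ⁆ H₁ :=
    { toLinearMap := Submodule.liftQ (LieAlgebra.derivedSeries ℚ H 1).toSubmodule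
        F₂.toLinearMap hle
      map_lie' := by
        intro x y
        obtain ⟨a, rfl⟩ := hqsurj x
        obtain ⟨b, rfl⟩ := hqsurj y
        show Submodule.liftQ (LieAlgebra.derivedSeries ℚ H 1).toSubmodule F₂.toLinearMap hle
            ⁅qLie a, qLie b⁆
          = ⁅Submodule.liftQ (LieAlgebra.derivedSeries ℚ H 1).toSubmodule F₂.toLinearMap hle
              (qLie a),
            Submodule.liftQ (LieAlgebra.derivedSeries ℚ H 1).toSubmodule F₂.toLinearMap hle
              (qLie b)⁆
        rw [← qLie.map_lie, happ, happ, happ]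
        exact F₂.map_lie a b }
  have hF₂'q : ∀ c : H, F₂' (qLie c) = F₂ c := fun c => rfl
  -- F₂' ∘ F₁ = id
  have hcomp2 : F₂'.comp F₁ = LieHom.id := by
    refine aux_holonomy_ext h₁ _ _ fun a => ?_
    induction a using QuotientGroup.induction_on with
    | H g =>
      show F₂' (F₁ (ι₁ (QuotientGroup.mk g))) = ι₁ (QuotientGroup.mk g)
      rw [hF₁, hfb, hF₂'q, hF₂]
  -- assemble the equivalence
  have hF₁F₂ : ∀ h : H, F₁ (F₂ h) = qLie h := fun h => DFunLike.congr_fun hcomp1 h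
  let e : H₁ ≃ₗ⁅ℚ⁆ H ⧸ LieAlgebra.derivedSeries ℚ H 1 :=
    { toLieHom := F₁
      invFun := F₂'
      left_inv := fun a => DFunLike.congr_fun hcomp2 a
      right_inv := fun z => by
        obtain ⟨h0, rfl⟩ := hqsurj z
        show F₁ (F₂' (qLie h0)) = qLie h0
        rw [hF₂'q, hF₁F₂] }
  have hF₁surj : Function.Surjective F₁ := fun z => ⟨F₂' z, e.right_inv z⟩
  -- the gradings
  refine ⟨e, fun k => ?_⟩
  have hV₁ : Submodule.span ℚ (Set.range ι₁) = ⊤ := by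
    rw [← aux_coe_lieSpan_eq_span habH₁ (Set.range ι₁), h₁.gen]
    rfl
  have hrtop : LinearMap.range F₁.toLinearMap = ⊤ :=
    LinearMap.range_eq_top.mpr fun z => hF₁surj z
  show (lieDeg (Submodule.span ℚ (Set.range ι₁)) k).map F₁.toLinearMap
      = (lieDeg (Submodule.span ℚ (Set.range ι)) k).map qLie.toLinearMap
  rw [aux_lieDeg_map, aux_lieDeg_map, hV₁,
    aux_map_span_eq_top qLie hqsurj habQ _ hH.gen, Submodule.map_top, hrtop]

/-- Part 2 of the statement. -/
lemma aux_part2 (hH : IsHolonomy G H ι) {i : ℕ} (hi : 2 ≤ i)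
    (Hi : Type u) [LieRing Hi] [LieAlgebra ℚ Hi]
    (ιi : (G ⧸ derivedSeries G i) → Hi)
    (hHi : IsHolonomy (G ⧸ derivedSeries G i) Hi ιi) :
    ∃ F : H →ₗ⁅ℚ⁆ Hi,
      (∀ g : G, F (ι g) = ιi (QuotientGroup.mk g)) ∧ Function.Bijective F ∧
      ∀ j, (holDeg ι j).map F.toLinearMap = holDeg ιi j := by
  have hN2 : derivedSeries G i ≤ (⊤ : Subgroup G).lowerCentralSeries 2 := aux_derivedSeries_le_lcs_two hi
  have hN1 : derivedSeries G i ≤ commutator G :=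
    aux_derivedSeries_le_commutator (le_trans one_le_two hi)
  -- the forward morphism
  obtain ⟨F, hF, -⟩ := hH.univ Hi (fun g => ιi (QuotientGroup.mk g))
    (fun a b => by
      show ιi (QuotientGroup.mk (a * b)) = ιi (QuotientGroup.mk a) + ιi (QuotientGroup.mk b)
      rw [QuotientGroup.mk_mul, hHi.map_mul])
    (fun s c x y hxy => by
      have h2 := (aux_grTrivial_quot_iff (derivedSeries G i) hN2 s c x y).mp hxy
      exact hHi.rel s c _ _ h2)
  -- the backward morphism
  obtain ⟨fb, hfb, hfbadd⟩ := aux_quot_lift (derivedSeries G i) ι hH.map_mul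
    (fun n hn => aux_ι_eq_zero hH (hN1 hn))
  obtain ⟨F', hF', -⟩ := hHi.univ H fb hfbadd
    (fun s c x y hxy => by
      have hx : ∀ j, (QuotientGroup.mk ((x j).out) : G ⧸ derivedSeries G i) = x j :=
        fun j => Quotient.out_eq' (x j)
      have hy : ∀ j, (QuotientGroup.mk ((y j).out) : G ⧸ derivedSeries G i) = y j :=
        fun j => Quotient.out_eq' (y j)
      have hxy' : GrTrivial (G ⧸ derivedSeries G i) s c
          (fun j => QuotientGroup.mk ((x j).out)) (fun j => QuotientGroup.mk ((y j).out)) := by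
        unfold GrTrivial at hxy ⊢
        refine Eq.trans (Finset.sum_congr rfl fun j _ => ?_) hxy
        exact congrArg _ (congrArg _ (Subtype.ext (by simp only [hx, hy])))
      have hGr : GrTrivial G s c (fun j => (x j).out) (fun j => (y j).out) :=
        (aux_grTrivial_quot_iff (derivedSeries G i) hN2 s c _ _).mpr hxy'
      have hrel := hH.rel s c _ _ hGr
      refine Eq.trans (Finset.sum_congr rfl fun j _ => ?_) hrel
      show c j • ⁅fb (x j), fb (y j)⁆ = c j • ⁅ι ((x j).out), ι ((y j).out)⁆
      conv_lhs => rw [← hx j, ← hy j, hfb, hfb])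
  -- the two maps are inverse
  have hFF' : F.comp F' = LieHom.id := by
    refine aux_holonomy_ext hHi _ _ fun a => ?_
    induction a using QuotientGroup.induction_on with
    | H g =>
      show F (F' (ιi (QuotientGroup.mk g))) = ιi (QuotientGroup.mk g)
      rw [hF', hfb, hF]
  have hF'F : F'.comp F = LieHom.id := by
    refine aux_holonomy_ext hH _ _ fun g => ?_
    show F' (F (ι g)) = ι g
    rw [hF, hF', hfb]
  have hbij : Function.Bijective F := by
    constructor
    · exact Function.LeftInverse.injective (g := F') fun h => DFunLike.congr_fun hF'F h
    · exact fun z => ⟨F' z, DFunLike.congr_fun hFF' z⟩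
  refine ⟨F, hF, hbij, fun j => ?_⟩
  -- gradings
  have himg : F.toLinearMap '' (Set.range ι) = Set.range ιi := by
    ext z
    constructor
    · rintro ⟨-, ⟨g, rfl⟩, rfl⟩
      exact ⟨QuotientGroup.mk g, (hF g).symm⟩
    · rintro ⟨a, rfl⟩
      obtain ⟨g, rfl⟩ := QuotientGroup.mk_surjective a
      exact ⟨ι g, ⟨g, rfl⟩, hF g⟩
  show (lieDeg (Submodule.span ℚ (Set.range ι)) j).map F.toLinearMap
      = lieDeg (Submodule.span ℚ (Set.range ιi)) j
  rw [aux_lieDeg_map, Submodule.map_span, himg]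

end AuxMain

/-- Proposition 6.9 of [Suciu–Wang].  For a finitely generated group
`G` with derived series `G⁽ⁱ⁾`:  `𝔥(G/G⁽¹⁾) ≅ 𝔥(G)/𝔥(G)′` (as graded Lie algebras),
and for each `i ≥ 2` the projection `G → G/G⁽ⁱ⁾` induces an isomorphism of graded Lie
algebras `𝔥(G) ≅ 𝔥(G/G⁽ⁱ⁾)`. -/
theorem holonomy_derived_quotients (G : Type u) [Group G] (hG : Group.FG G)
    (H : Type u) [LieRing H] [LieAlgebra ℚ H] (ι : G → H) (hH : IsHolonomy G H ι) :
    (∀ (H₁ : Type u) [LieRing H₁] [LieAlgebra ℚ H₁]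
        (ι₁ : (G ⧸ derivedSeries G 1) → H₁),
        IsHolonomy (G ⧸ derivedSeries G 1) H₁ ι₁ →
        IsGradedLieIso (holDeg ι₁)
          (fun k => (holDeg ι k).map
            (LieSubmodule.Quotient.mk' (LieAlgebra.derivedSeries ℚ H 1)).toLinearMap)) ∧
    (∀ i : ℕ, 2 ≤ i →
      ∀ (Hi : Type u) [LieRing Hi] [LieAlgebra ℚ Hi]
        (ιi : (G ⧸ derivedSeries G i) → Hi),
        IsHolonomy (G ⧸ derivedSeries G i) Hi ιi →
        ∃ F : H →ₗ⁅ℚ⁆ Hi,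
          (∀ g : G, F (ι g) = ιi (QuotientGroup.mk g)) ∧ Function.Bijective F ∧
          ∀ j, (holDeg ι j).map F.toLinearMap = holDeg ιi j) :=
  ⟨fun H₁ _ _ ι₁ h₁ => aux_part1 hH H₁ ι₁ h₁,
   fun _i hi Hi _ _ ιi hHi => aux_part2 hH hi Hi ιi hHi⟩

end ArXiv170107768
end
end
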